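/- (Lemma 3.1 iii) Let b be a cluster decomposition with 2 ≤ |b| ≤ N, let ρ > 0, θ > 0, let θ′ satisfy 0 < θ′ ≤ min(θ, 1), and let γ > 1. Set γ′_1 = γ(1+θ′) and γ′_2 = (1+γ)(1+θ′)^{-1}. Then: (a) T_b(ρ,θ) ∩ S_{θ′} ⊆ T̃_b(ρ,θ) ∩ S_{θ′}; (b) the closure of T̃_b(ρ,θ) ∩ S_{θ′} is compact and is contained in T̃_b(γ^{-1}ρ, γθ); and (c) T̃_b(γ^{-1}ρ, γθ) ∩ S_{θ′} ⊆ T_b((γ′_1)^{-1}ρ, γ′_2 θ) ∩ S_{θ′}. -/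

import Mathlib

open scoped BigOperators

noncomputable section

/-- The one-particle space `ℝ^ν`. -/
abbrev Vec (ν : ℕ) := EuclideanSpace ℝ (Fin ν)

/-- Configurations of `N` particles in `ℝ^ν`. -/
abbrev Conf (N ν : ℕ) := Fin N → Vec ν

/-- The mass inner product `⟨r,s⟩ = Σ m_i (r_i · s_i)`. -/
def minner {N ν : ℕ} (m : Fin N → ℝ) (r s : Conf N ν) : ℝ :=
  ∑ i, m i * (inner ℝ (r i) (s i) : ℝ)

/-- The subspace `X_b = { r ∈ X : r is constant on each cluster of b }`. -/
def XbSet {N ν : ℕ} (m : Fin N → ℝ) (b : Setoid (Fin N)) : Set (Conf N ν) :=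
  {r | (∑ i, m i • r i = 0) ∧ ∀ i j, b.r i j → r i = r j}

/-- `p` is the orthogonal projection of `r` onto `S` w.r.t. the mass inner product. -/
def IsOrthProjOn {N ν : ℕ} (m : Fin N → ℝ) (S : Set (Conf N ν)) (r p : Conf N ν) : Prop :=
  p ∈ S ∧ ∀ w ∈ S, minner m (r - p) w = 0

open scoped Classical in
/-- `M_C`, the total mass of the `b`-cluster of `i`. -/
def Mcl {N : ℕ} (m : Fin N → ℝ) (b : Setoid (Fin N)) (i : Fin N) : ℝ :=
  ∑ j ∈ Finset.univ.filter (fun j => b.r i j), m j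

open scoped Classical in
/-- `R_C(r)`, the weighted center of mass of the `b`-cluster of `i`. -/
def Rcl {N ν : ℕ} (m : Fin N → ℝ) (b : Setoid (Fin N)) (i : Fin N) (r : Conf N ν) : Vec ν :=
  (Mcl m b i)⁻¹ • ∑ j ∈ Finset.univ.filter (fun j => b.r i j), m j • r j

/-- `|z_{CD}(r)|²` for the clusters `C ∋ i`, `D ∋ j` of `b`. -/
def zsq {N ν : ℕ} (m : Fin N → ℝ) (b : Setoid (Fin N)) (r : Conf N ν) (i j : Fin N) : ℝ :=
  (Mcl m b i * Mcl m b j / (Mcl m b i + Mcl m b j)) * ‖Rcl m b i r - Rcl m b j r‖ ^ 2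

/-- The set `T_b(ρ,θ) ⊆ X`. -/
def Tb {N ν : ℕ} (m : Fin N → ℝ) (b : Setoid (Fin N)) (ρ θ : ℝ) : Set (Conf N ν) :=
  {x | (∑ i, m i • x i = 0) ∧
    (∀ i j, ¬ b.r i j → zsq m b x i j > ρ * minner m x x) ∧
    ∃ p : Conf N ν, IsOrthProjOn m (XbSet m b) x p ∧
      minner m p p > (1 - θ) * minner m x x}

/-- The set `T̃_b(ρ,θ) ⊆ X`. -/
def Tbt {N ν : ℕ} (m : Fin N → ℝ) (b : Setoid (Fin N)) (ρ θ : ℝ) : Set (Conf N ν) :=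
  {x | (∑ i, m i • x i = 0) ∧
    (∀ i j, ¬ b.r i j → zsq m b x i j > ρ) ∧
    ∃ p : Conf N ν, IsOrthProjOn m (XbSet m b) x p ∧
      minner m p p > 1 - θ}

/-- The spherical shell `S_{θ'} = { x ∈ X : 1 ≤ |x|² ≤ 1 + θ' }`. -/
def Sshell {N ν : ℕ} (m : Fin N → ℝ) (θ' : ℝ) : Set (Conf N ν) :=
  {x | (∑ i, m i • x i = 0) ∧ 1 ≤ minner m x x ∧ minner m x x ≤ 1 + θ'}
section Aux
open scoped Classical
variable {N ν : ℕ} (m : Fin N → ℝ) (b : Setoid (Fin N))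

lemma minner_nonneg' (hm : ∀ i, 0 < m i) (x : Conf N ν) : 0 ≤ minner m x x :=
  Finset.sum_nonneg fun i _ => mul_nonneg (hm i).le real_inner_self_nonneg

lemma minner_sub_left' (u v w : Conf N ν) :
    minner m (u - v) w = minner m u w - minner m v w := by
  simp [minner, Pi.sub_apply, inner_sub_left, mul_sub, Finset.sum_sub_distrib]

lemma minner_self_eq_zero' (hm : ∀ i, 0 < m i) {x : Conf N ν} (h : minner m x x = 0) :
    x = 0 := by
  have h0 : ∀ i ∈ Finset.univ, (0:ℝ) ≤ m i * inner ℝ (x i) (x i) :=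
    fun i _ => mul_nonneg (hm i).le real_inner_self_nonneg
  funext i
  have h1 := (Finset.sum_eq_zero_iff_of_nonneg h0).mp h i (Finset.mem_univ i)
  have h2 : (inner ℝ (x i) (x i) : ℝ) = 0 := by
    rcases mul_eq_zero.mp h1 with h' | h'
    · exact absurd h' (hm i).ne'
    · exact h'
  simpa using inner_self_eq_zero.mp h2

lemma Mcl_pos' (hm : ∀ i, 0 < m i) (i : Fin N) : 0 < Mcl m b i := by
  apply Finset.sum_pos'
  · exact fun j _ => (hm j).le
  · exact ⟨i, by simp [b.iseqv.refl i], hm i⟩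

lemma cluster_filter_eq {i j : Fin N} (h : b.r i j) :
    Finset.univ.filter (fun k => b.r i k) = Finset.univ.filter (fun k => b.r j k) := by
  ext k
  simp only [Finset.mem_filter, Finset.mem_univ, true_and]
  exact ⟨fun hik => b.iseqv.trans (b.iseqv.symm h) hik, fun hjk => b.iseqv.trans h hjk⟩

lemma Mcl_congr {i j : Fin N} (h : b.r i j) : Mcl m b i = Mcl m b j := by
  rw [Mcl, Mcl, cluster_filter_eq b h]

lemma Rcl_congr {i j : Fin N} (h : b.r i j) (x : Conf N ν) :
    Rcl m b i x = Rcl m b j x := by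
  rw [Rcl, Rcl, Mcl_congr m b h, cluster_filter_eq b h]

lemma cluster_swap {E : Type*} [AddCommGroup E] [Module ℝ E] (hm : ∀ i, 0 < m i)
    (c : Fin N → E) :
    ∑ i, (m i * (Mcl m b i)⁻¹) • ∑ j ∈ Finset.univ.filter (fun j => b.r i j), m j • c j
      = ∑ j, m j • c j := by
  have step : ∀ i, (m i * (Mcl m b i)⁻¹) •
        ∑ j ∈ Finset.univ.filter (fun j => b.r i j), m j • c j
      = ∑ j ∈ Finset.univ.filter (fun j => b.r i j), (m i * (Mcl m b i)⁻¹ * m j) • c j := by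
    intro i
    rw [Finset.smul_sum]
    exact Finset.sum_congr rfl fun j _ => (smul_smul _ _ _)
  rw [Finset.sum_congr rfl fun i _ => step i]
  rw [Finset.sum_comm' (t' := Finset.univ)
    (s' := fun j => Finset.univ.filter (fun i => b.r i j))
    (fun i j => by simp [and_comm])]
  refine Finset.sum_congr rfl fun j _ => ?_
  have h1 : ∀ i ∈ Finset.univ.filter (fun i => b.r i j),
      (m i * (Mcl m b i)⁻¹ * m j) • c j = (m i * ((Mcl m b j)⁻¹ * m j)) • c j := by
    intro i hi
    rw [Finset.mem_filter] at hi
    rw [Mcl_congr m b hi.2, mul_assoc]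
  rw [Finset.sum_congr rfl h1, ← Finset.sum_smul, ← Finset.sum_mul]
  have hfil : Finset.univ.filter (fun i => b.r i j) = Finset.univ.filter (fun i => b.r j i) := by
    ext k
    simp only [Finset.mem_filter, Finset.mem_univ, true_and]
    exact ⟨fun h => b.iseqv.symm h, fun h => b.iseqv.symm h⟩
  rw [hfil]
  have hM : (∑ i ∈ Finset.univ.filter (fun i => b.r j i), m i) = Mcl m b j := rfl
  rw [hM, ← mul_assoc, mul_inv_cancel₀ (Mcl_pos' m b hm j).ne', one_mul]

/-- The explicit orthogonal projection onto `X_b`. -/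
def Pb (x : Conf N ν) : Conf N ν := fun i => Rcl m b i x

lemma Pb_cm (hm : ∀ i, 0 < m i) (x : Conf N ν) :
    ∑ i, m i • Pb m b x i = ∑ i, m i • x i := by
  have h : ∀ i, m i • Pb m b x i
      = (m i * (Mcl m b i)⁻¹) • ∑ j ∈ Finset.univ.filter (fun j => b.r i j), m j • x j := by
    intro i
    rw [Pb, Rcl, smul_smul]
  rw [Finset.sum_congr rfl fun i _ => h i, cluster_swap m b hm x]

lemma Pb_orthproj (hm : ∀ i, 0 < m i) (x : Conf N ν) (hx : ∑ i, m i • x i = 0) :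
    IsOrthProjOn m (XbSet m b) x (Pb m b x) := by
  constructor
  · exact ⟨by rw [Pb_cm m b hm x, hx], fun i j h => Rcl_congr m b h x⟩
  · intro w hw
    rw [minner_sub_left', sub_eq_zero]
    have key : ∀ i, m i * (inner ℝ (Pb m b x i) (w i) : ℝ)
        = (m i * (Mcl m b i)⁻¹) • ∑ j ∈ Finset.univ.filter (fun j => b.r i j),
            m j • (inner ℝ (x j) (w j) : ℝ) := by
      intro i
      have hs : ∀ j ∈ Finset.univ.filter (fun j => b.r i j),
          m j • (inner ℝ (x j) (w j) : ℝ) = m j * (inner ℝ (x j) (w i) : ℝ) := by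
        intro j hj
        rw [Finset.mem_filter] at hj
        rw [smul_eq_mul, hw.2 i j hj.2]
      rw [Finset.sum_congr rfl hs, smul_eq_mul]
      show m i * (inner ℝ (Rcl m b i x) (w i) : ℝ) = _
      rw [Rcl, real_inner_smul_left, sum_inner]
      simp_rw [real_inner_smul_left]
      ring
    calc minner m x w = ∑ j, m j • (inner ℝ (x j) (w j) : ℝ) := by
          simp [minner, smul_eq_mul]
      _ = ∑ i, (m i * (Mcl m b i)⁻¹) • ∑ j ∈ Finset.univ.filter (fun j => b.r i j),
            m j • (inner ℝ (x j) (w j) : ℝ) := (cluster_swap m b hm _).symm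
      _ = minner m (Pb m b x) w := by
          rw [minner]
          exact (Finset.sum_congr rfl fun i _ => (key i)).symm

lemma proj_eq_Pb (hm : ∀ i, 0 < m i) (x p : Conf N ν) (hx : ∑ i, m i • x i = 0)
    (h : IsOrthProjOn m (XbSet m b) x p) : p = Pb m b x := by
  have hP := Pb_orthproj m b hm x hx
  have hqmem : p - Pb m b x ∈ XbSet m b (ν := ν) := by
    obtain ⟨⟨hp1, hp2⟩, -⟩ := h
    obtain ⟨⟨hP1, hP2⟩, -⟩ := hP
    constructor
    · simp only [Pi.sub_apply, smul_sub, Finset.sum_sub_distrib, hp1, hP1, sub_zero]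
    · intro i j hij
      simp only [Pi.sub_apply, hp2 i j hij, hP2 i j hij]
  have h1 := h.2 _ hqmem
  have h2 := hP.2 _ hqmem
  have h3 : minner m (p - Pb m b x) (p - Pb m b x) = 0 := by
    have h4 : minner m ((x - Pb m b x) - (x - p)) (p - Pb m b x) = 0 := by
      rw [minner_sub_left', h1, h2, sub_zero]
    have he : (x - Pb m b x) - (x - p) = p - Pb m b x := by abel
    rwa [he] at h4
  exact sub_eq_zero.mp (minner_self_eq_zero' m hm h3)

lemma continuous_cm : Continuous (fun x : Conf N ν => ∑ i, m i • x i) :=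
  continuous_finset_sum _ fun i _ => (continuous_apply i).const_smul (m i)

lemma continuous_Rcl (i : Fin N) : Continuous (fun x : Conf N ν => Rcl m b i x) := by
  unfold Rcl
  exact (continuous_finset_sum _ fun j _ => (continuous_apply j : Continuous fun x : Conf N ν => x j).const_smul (m j)).const_smul (Mcl m b i)⁻¹

lemma continuous_zsq (i j : Fin N) : Continuous (fun x : Conf N ν => zsq m b x i j) := by
  unfold zsq
  exact continuous_const.mul (((continuous_Rcl m b i).sub (continuous_Rcl m b j)).norm.pow 2)

lemma continuous_F : Continuous (fun x : Conf N ν => minner m (Pb m b x) (Pb m b x)) := by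
  unfold minner Pb
  exact continuous_finset_sum _ fun i _ =>
    continuous_const.mul ((continuous_Rcl m b i).inner (continuous_Rcl m b i))

end Aux
/-- Lemma 3.1 iii: with `γ′_1 = γ(1+θ′)` and `γ′_2 = (1+γ)(1+θ′)⁻¹`,
(a) `T_b(ρ,θ) ∩ S_{θ′} ⊆ T̃_b(ρ,θ) ∩ S_{θ′}`;
(b) the closure of `T̃_b(ρ,θ) ∩ S_{θ′}` is compact and contained in `T̃_b(γ⁻¹ρ, γθ)`;
(c) `T̃_b(γ⁻¹ρ, γθ) ∩ S_{θ′} ⊆ T_b((γ′_1)⁻¹ρ, γ′_2 θ) ∩ S_{θ′}`. -/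
theorem stmt5 {N ν : ℕ} (hN : 2 ≤ N) (hν : 1 ≤ ν) (m : Fin N → ℝ) (hm : ∀ i, 0 < m i)
    (b : Setoid (Fin N)) (hb2 : 2 ≤ Nat.card (Quotient b)) (hbN : Nat.card (Quotient b) ≤ N)
    (ρ θ θ' γ : ℝ) (hρ : 0 < ρ) (hθ : 0 < θ) (hθ'0 : 0 < θ') (hθ' : θ' ≤ min θ 1)
    (hγ : 1 < γ) :
    Tb (ν := ν) m b ρ θ ∩ Sshell m θ' ⊆ Tbt (ν := ν) m b ρ θ ∩ Sshell m θ' ∧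
    IsCompact (closure (Tbt (ν := ν) m b ρ θ ∩ Sshell m θ')) ∧
    closure (Tbt (ν := ν) m b ρ θ ∩ Sshell m θ') ⊆ Tbt (ν := ν) m b (γ⁻¹ * ρ) (γ * θ) ∧
    Tbt (ν := ν) m b (γ⁻¹ * ρ) (γ * θ) ∩ Sshell m θ' ⊆
      Tb (ν := ν) m b ((γ * (1 + θ'))⁻¹ * ρ) (((1 + γ) * (1 + θ')⁻¹) * θ) ∩ Sshell m θ' := by
  classical
  have hθ'1 : θ' ≤ 1 := le_trans hθ' (min_le_right _ _)
  have hθ'θ : θ' ≤ θ := le_trans hθ' (min_le_left _ _)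
  have hγ0 : 0 < γ := lt_trans one_pos hγ
  have h1θ' : (0:ℝ) < 1 + θ' := by linarith
  -- boundedness of the set
  have hne : (Finset.univ : Finset (Fin N)).Nonempty := ⟨⟨0, by omega⟩, Finset.mem_univ _⟩
  have hc0 : 0 < Finset.univ.inf' hne m := (Finset.lt_inf'_iff hne).mpr fun i _ => hm i
  set c : ℝ := Finset.univ.inf' hne m with hcdef
  have hbdd : Bornology.IsBounded (Tbt (ν := ν) m b ρ θ ∩ Sshell m θ') := by
    refine (isBounded_iff_forall_norm_le).mpr ⟨Real.sqrt ((1+θ')/c), fun x hx => ?_⟩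
    obtain ⟨-, -, -, hle⟩ := hx
    rw [pi_norm_le_iff_of_nonneg (Real.sqrt_nonneg _)]
    intro i
    have h1 : m i * ‖x i‖^2 ≤ minner m x x := by
      have h1' : m i * (inner ℝ (x i) (x i) : ℝ) ≤ minner m x x :=
        Finset.single_le_sum (f := fun j => m j * (inner ℝ (x j) (x j) : ℝ))
          (fun j _ => mul_nonneg (hm j).le real_inner_self_nonneg) (Finset.mem_univ i)
      rwa [real_inner_self_eq_norm_sq] at h1'
    have hci : c ≤ m i := Finset.inf'_le m (Finset.mem_univ i)
    have h2 : c * ‖x i‖^2 ≤ 1 + θ' := by nlinarith [sq_nonneg ‖x i‖]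
    have h3 : ‖x i‖^2 ≤ (1+θ')/c := by rw [le_div_iff₀ hc0]; linarith
    calc ‖x i‖ = Real.sqrt (‖x i‖^2) := (Real.sqrt_sq (norm_nonneg _)).symm
      _ ≤ Real.sqrt ((1+θ')/c) := Real.sqrt_le_sqrt h3
  -- closure bound
  have key : closure (Tbt (ν := ν) m b ρ θ ∩ Sshell m θ') ⊆
      {x : Conf N ν | (∑ i, m i • x i = 0) ∧
        (∀ i j, ¬ b.r i j → ρ ≤ zsq m b x i j) ∧
        1 - θ ≤ minner m (Pb m b x) (Pb m b x)} := by
    apply closure_minimal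
    · rintro x ⟨⟨hcm, hz, p, hp, hpp⟩, -⟩
      refine ⟨hcm, fun i j hij => (hz i j hij).le, ?_⟩
      rw [← proj_eq_Pb m b hm x p hcm hp]
      exact hpp.le
    · have hset : {x : Conf N ν | (∑ i, m i • x i = 0) ∧
          (∀ i j, ¬ b.r i j → ρ ≤ zsq m b x i j) ∧
          1 - θ ≤ minner m (Pb m b x) (Pb m b x)} =
          {x : Conf N ν | ∑ i, m i • x i = 0} ∩
          ((⋂ i, ⋂ j, {x : Conf N ν | ¬ b.r i j → ρ ≤ zsq m b x i j}) ∩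
           {x : Conf N ν | 1 - θ ≤ minner m (Pb m b x) (Pb m b x)}) := by
        ext x
        simp only [Set.mem_setOf_eq, Set.mem_inter_iff, Set.mem_iInter]
      rw [hset]
      refine (isClosed_eq (continuous_cm m) continuous_const).inter
        ((isClosed_iInter fun i => isClosed_iInter fun j => ?_).inter
         (isClosed_le continuous_const (continuous_F m b)))
      by_cases h : b.r i j
      · simp [h]
      · simp only [h, not_false_iff, true_implies]
        exact isClosed_le continuous_const (continuous_zsq m b i j)
  refine ⟨?_, ?_, ?_, ?_⟩
  -- (a)
  · rintro x ⟨⟨hcm, hz, p, hp, hpp⟩, hs⟩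
    have hx1 : 1 ≤ minner m x x := hs.2.1
    refine ⟨⟨hcm, fun i j hij => ?_, p, hp, ?_⟩, hs⟩
    · have h1 := hz i j hij
      nlinarith
    · by_cases hθ1 : θ ≤ 1
      · nlinarith
      · have h0 : 0 ≤ minner m p p := minner_nonneg' m hm p
        linarith
  -- (b) compactness
  · exact Metric.isCompact_of_isClosed_isBounded isClosed_closure hbdd.closure
  -- (b) inclusion
  · intro x hx
    obtain ⟨hcm, hz, hF⟩ := key hx
    refine ⟨hcm, fun i j hij => ?_, Pb m b x, Pb_orthproj m b hm x hcm, ?_⟩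
    · have hlt : γ⁻¹ * ρ < ρ := by
        have hinv : γ⁻¹ < 1 := inv_lt_one_of_one_lt₀ hγ
        nlinarith
      exact lt_of_lt_of_le hlt (hz i j hij)
    · have hlt : 1 - γ * θ < 1 - θ := by nlinarith
      exact lt_of_lt_of_le hlt hF
  -- (c)
  · rintro x ⟨⟨hcm, hz, p, hp, hpp⟩, hs⟩
    have hx1 : 1 ≤ minner m x x := hs.2.1
    have hx2 : minner m x x ≤ 1 + θ' := hs.2.2
    refine ⟨⟨hcm, fun i j hij => ?_, p, hp, ?_⟩, hs⟩
    · have h1 := hz i j hij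
      have hinv : 0 < (1+θ')⁻¹ := by positivity
      have e2 : (1+θ')⁻¹ * minner m x x ≤ 1 := by
        nlinarith [mul_le_mul_of_nonneg_left hx2 hinv.le, inv_mul_cancel₀ h1θ'.ne']
      have e3 : (0:ℝ) ≤ γ⁻¹ * ρ := by positivity
      have keyc : (γ * (1 + θ'))⁻¹ * ρ * minner m x x ≤ γ⁻¹ * ρ := by
        rw [mul_inv]
        have e1 : γ⁻¹ * (1 + θ')⁻¹ * ρ * minner m x x
            = γ⁻¹ * ρ * ((1+θ')⁻¹ * minner m x x) := by ring
        rw [e1]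
        nlinarith
      linarith
    · set β := (1 + γ) * (1 + θ')⁻¹ * θ with hβdef
      by_cases hcase : 0 ≤ 1 - β
      · have hb1 : (1-β) * (1+θ') = 1 + θ' - (1+γ) * θ := by
          rw [hβdef]
          field_simp
        have hb2 : (1-β) * minner m x x ≤ (1-β) * (1+θ') :=
          mul_le_mul_of_nonneg_left hx2 hcase
        have hb3 : 1 + θ' - (1+γ) * θ ≤ 1 - γ * θ := by linarith
        linarith
      · push_neg at hcase
        have hneg : (1-β) * minner m x x < 0 :=
          mul_neg_of_neg_of_pos (by linarith) (by linarith)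
        have h0 : 0 ≤ minner m p p := minner_nonneg' m hm p
        linarith
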